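/- Let t₁ < t₂ be real numbers and let p₂, q₂ : [t₁,t₂] → ℝ be continuous with p₂(t) > 0 for all t ∈ [t₁,t₂]. Define J(u) = ∫_{t₁}^{t₂} [p₂(t)(u'(t))² − q₂(t)(u(t))²] dt. Suppose there exists a function u ∈ C¹[t₁,t₂] with u(t₁) = 0 = u(t₂), u not identically zero, such that J(u) ≤ 0. Then every real solution v of (p₂(t)v'(t))' + q₂(t)v(t) = 0 on [t₁,t₂], except constant multiples of u, vanishes at some point of the open interval (t₁,t₂). -/

import Mathlib

/-- `v` is a solution of `(p(t) v'(t))' + q(t) v(t) = 0` on `[t₁, t₂]`: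
`v` is continuously differentiable on `[t₁,t₂]`, `t ↦ p(t) v'(t)` is continuously
differentiable on `[t₁,t₂]`, and the equation holds for all `t ∈ [t₁,t₂]`. -/
def IsODESolution (t₁ t₂ : ℝ) (p q v : ℝ → ℝ) : Prop :=
  ContDiffOn ℝ 1 v (Set.Icc t₁ t₂) ∧
  ContDiffOn ℝ 1 (fun t => p t * derivWithin v (Set.Icc t₁ t₂) t) (Set.Icc t₁ t₂) ∧
  ∀ t ∈ Set.Icc t₁ t₂,
    derivWithin (fun τ => p τ * derivWithin v (Set.Icc t₁ t₂) τ) (Set.Icc t₁ t₂) t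
      + q t * v t = 0

/-- The quadratic functional `J(u) = ∫_{t₁}^{t₂} [p₂ (u')² − q₂ u²] dt`. -/
noncomputable def quadFunctional (t₁ t₂ : ℝ) (p₂ q₂ u : ℝ → ℝ) : ℝ :=
  ∫ t in t₁..t₂,
    (p₂ t * (derivWithin u (Set.Icc t₁ t₂) t) ^ 2 - q₂ t * (u t) ^ 2)


open Set Filter intervalIntegral Topology

/-- If a solution of `(p v')' + q v = 0` has `v(t₀) = 0` and `v'(t₀) = 0` at an endpoint,
then `v ≡ 0` on `[t₁, t₂]`. -/
lemma ode_zero_unique (t₁ t₂ : ℝ) (ht : t₁ < t₂) (p q vf : ℝ → ℝ)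
    (hp : ContinuousOn p (Set.Icc t₁ t₂)) (hq : ContinuousOn q (Set.Icc t₁ t₂))
    (hppos : ∀ t ∈ Set.Icc t₁ t₂, 0 < p t)
    (hv1 : ContDiffOn ℝ 1 vf (Set.Icc t₁ t₂))
    (hv2 : ContDiffOn ℝ 1 (fun t => p t * derivWithin vf (Set.Icc t₁ t₂) t) (Set.Icc t₁ t₂))
    (hv3 : ∀ t ∈ Set.Icc t₁ t₂,
      derivWithin (fun τ => p τ * derivWithin vf (Set.Icc t₁ t₂) τ) (Set.Icc t₁ t₂) t
        + q t * vf t = 0)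
    (t₀ : ℝ) (ht₀ : t₀ = t₁ ∨ t₀ = t₂)
    (h0 : vf t₀ = 0) (h0' : derivWithin vf (Set.Icc t₁ t₂) t₀ = 0) :
    ∀ t ∈ Set.Icc t₁ t₂, vf t = 0 := by
  set I := Set.Icc t₁ t₂ with hIdef
  set v' : ℝ → ℝ := fun t => derivWithin vf I t with hv'def
  set w : ℝ → ℝ := fun t => p t * v' t with hwdef
  -- bounds
  obtain ⟨tm, htm, hmin⟩ := isCompact_Icc.exists_isMinOn (Set.nonempty_Icc.mpr ht.le) hp
  set m : ℝ := p tm with hmdef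
  have hm : 0 < m := hppos tm htm
  obtain ⟨Qb, hQb⟩ := isCompact_Icc.exists_bound_of_continuousOn hq
  have hQb0 : 0 ≤ Qb := le_trans (norm_nonneg _) (hQb t₁ ⟨le_rfl, ht.le⟩)
  set Kr : ℝ := max m⁻¹ Qb with hKrdef
  have hKr0 : 0 ≤ Kr := le_trans (le_of_lt (inv_pos.mpr hm)) (le_max_left _ _)
  set K : NNReal := ⟨Kr, hKr0⟩ with hKdef
  -- the vector field
  set P : ℝ → ℝ := fun t => if t ∈ I then (p t)⁻¹ else 0 with hPdef
  set Q : ℝ → ℝ := fun t => if t ∈ I then q t else 0 with hQdef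
  set F : ℝ → ℝ × ℝ → ℝ × ℝ := fun t x => (P t * x.2, -Q t * x.1) with hFdef
  have hPle : ∀ t, |P t| ≤ m⁻¹ := by
    intro t
    by_cases htI : t ∈ I
    · simp only [hPdef, if_pos htI]
      rw [abs_of_nonneg (le_of_lt (inv_pos.mpr (hppos t htI)))]
      exact inv_anti₀ hm (hmin htI)
    · simp [hPdef, if_neg htI, le_of_lt (inv_pos.mpr hm)]
  have hQle : ∀ t, |Q t| ≤ Qb := by
    intro t
    by_cases htI : t ∈ I
    · simpa [hQdef, if_pos htI] using hQb t htI
    · simp [hQdef, if_neg htI, hQb0]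
  have hLip : ∀ t, LipschitzOnWith K (F t) (Set.univ : Set (ℝ × ℝ)) := by
    intro t
    rw [lipschitzOnWith_univ]
    apply LipschitzWith.of_dist_le_mul
    intro x y
    rw [Prod.dist_eq]
    have h1 : dist (P t * x.2) (P t * y.2) ≤ Kr * dist x y := by
      rw [Real.dist_eq, ← mul_sub, abs_mul]
      calc |P t| * |x.2 - y.2| ≤ m⁻¹ * dist x y := by
            apply mul_le_mul (hPle t) _ (abs_nonneg _) (le_of_lt (inv_pos.mpr hm))
            rw [← Real.dist_eq]
            exact Prod.dist_eq (x := x) (y := y) ▸ le_max_right _ _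
        _ ≤ Kr * dist x y := by
            apply mul_le_mul_of_nonneg_right (le_max_left _ _) dist_nonneg
    have h2 : dist (-Q t * x.1) (-Q t * y.1) ≤ Kr * dist x y := by
      rw [Real.dist_eq, ← mul_sub, abs_mul, abs_neg]
      calc |Q t| * |x.1 - y.1| ≤ Qb * dist x y := by
            apply mul_le_mul (hQle t) _ (abs_nonneg _) hQb0
            rw [← Real.dist_eq]
            exact Prod.dist_eq (x := x) (y := y) ▸ le_max_left _ _
        _ ≤ Kr * dist x y := by
            apply mul_le_mul_of_nonneg_right (le_max_right _ _) dist_nonneg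
    calc max (dist (P t * x.2) (P t * y.2)) (dist (-Q t * x.1) (-Q t * y.1))
        ≤ Kr * dist x y := max_le h1 h2
      _ = (K : ℝ) * dist x y := rfl
  -- the solution as a pair
  set f : ℝ → ℝ × ℝ := fun t => (vf t, w t) with hfdef
  have hdv : ∀ t ∈ I, HasDerivWithinAt vf (v' t) I t := fun t htI =>
    ((hv1.differentiableOn one_ne_zero) t htI).hasDerivWithinAt
  have hdw : ∀ t ∈ I, HasDerivWithinAt w (-(q t * vf t)) I t := by
    intro t htI
    have h := ((hv2.differentiableOn one_ne_zero) t htI).hasDerivWithinAt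
    have he : derivWithin w I t = -(q t * vf t) := by
      have := hv3 t htI; linarith
    rwa [he] at h
  have hfd : ∀ t ∈ I, HasDerivWithinAt f (F t (f t)) I t := by
    intro t htI
    have h : HasDerivWithinAt f (v' t, -(q t * vf t)) I t :=
      (hdv t htI).prodMk (hdw t htI)
    have he : F t (f t) = (v' t, -(q t * vf t)) := by
      simp only [hFdef, hfdef, hPdef, hQdef, if_pos htI, hwdef]
      have hpne : p t ≠ 0 := ne_of_gt (hppos t htI)
      rw [← mul_assoc, inv_mul_cancel₀ hpne, one_mul, neg_mul]
    rwa [he]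
  have hfc : ContinuousOn f I := (hv1.continuousOn).prodMk hv2.continuousOn
  -- zero solution
  set g : ℝ → ℝ × ℝ := fun _ => ((0 : ℝ), (0 : ℝ)) with hgdef
  have hgd : ∀ (t : ℝ), HasDerivWithinAt g (F t (g t)) I t := by
    intro t
    have : F t (g t) = 0 := by simp [hFdef, hgdef]
    rw [this]
    exact hasDerivWithinAt_const t I _
  have hft₀ : f t₀ = g t₀ := by
    simp only [hfdef, hgdef, h0, hwdef]
    simp only [hv'def]
    simp [h0']
  have key : Set.EqOn f g I := by
    rcases ht₀ with rfl | rfl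
    · apply ODE_solution_unique_of_mem_Icc_right (fun t _ => hLip t) hfc _ (fun t _ => Set.mem_univ _)
        (continuousOn_const) _ (fun t _ => Set.mem_univ _) hft₀
      · intro t htI
        have hmem : I ∈ 𝓝[Set.Ici t] t := by
          apply mem_nhdsWithin.mpr
          exact ⟨Set.Iio t₂, isOpen_Iio, htI.2, fun x hx => ⟨le_trans htI.1 hx.2, le_of_lt hx.1⟩⟩
        exact (hfd t (Set.mem_Icc.mpr ⟨htI.1, le_of_lt htI.2⟩)).mono_of_mem_nhdsWithin hmem
      · intro t htI
        exact (hgd t).mono_of_mem_nhdsWithin (by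
          apply mem_nhdsWithin.mpr
          exact ⟨Set.Iio t₂, isOpen_Iio, htI.2, fun x hx => ⟨le_trans htI.1 hx.2, le_of_lt hx.1⟩⟩)
    · apply ODE_solution_unique_of_mem_Icc_left (fun t _ => hLip t) hfc _ (fun t _ => Set.mem_univ _)
        (continuousOn_const) _ (fun t _ => Set.mem_univ _) hft₀
      · intro t htI
        have hmem : I ∈ 𝓝[Set.Iic t] t := by
          apply mem_nhdsWithin.mpr
          exact ⟨Set.Ioi t₁, isOpen_Ioi, htI.1, fun x hx => ⟨le_of_lt hx.1, le_trans hx.2 htI.2⟩⟩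
        exact (hfd t (Set.mem_Icc.mpr ⟨le_of_lt htI.1, htI.2⟩)).mono_of_mem_nhdsWithin hmem
      · intro t htI
        exact (hgd t).mono_of_mem_nhdsWithin (by
          apply mem_nhdsWithin.mpr
          exact ⟨Set.Ioi t₁, isOpen_Ioi, htI.1, fun x hx => ⟨le_of_lt hx.1, le_trans hx.2 htI.2⟩⟩)
  intro t htI
  have h2 := congrArg Prod.fst (key htI)
  simpa [hfdef, hgdef] using h2


/-- **Leighton's variational lemma.** -/


theorem leighton_variational_lemma
    (t₁ t₂ : ℝ) (ht : t₁ < t₂) (p₂ q₂ : ℝ → ℝ)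
    (hp₂ : ContinuousOn p₂ (Set.Icc t₁ t₂))
    (hq₂ : ContinuousOn q₂ (Set.Icc t₁ t₂))
    (hp₂pos : ∀ t ∈ Set.Icc t₁ t₂, 0 < p₂ t)
    (u : ℝ → ℝ) (hu : ContDiffOn ℝ 1 u (Set.Icc t₁ t₂))
    (hu₁ : u t₁ = 0) (hu₂ : u t₂ = 0)
    (hunt : ∃ t ∈ Set.Icc t₁ t₂, u t ≠ 0)
    (hJ : quadFunctional t₁ t₂ p₂ q₂ u ≤ 0)
    (v : ℝ → ℝ) (hv : IsODESolution t₁ t₂ p₂ q₂ v)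
    (hvu : ¬ ∃ c : ℝ, ∀ t ∈ Set.Icc t₁ t₂, v t = c * u t) :
    ∃ t ∈ Set.Ioo t₁ t₂, v t = 0 := by
  by_contra hcon
  push_neg at hcon
  obtain ⟨hv1, hv2, hv3⟩ := hv
  simp only [quadFunctional] at hJ
  set φ : ℝ → ℝ := fun t => p₂ t * (derivWithin u (Set.Icc t₁ t₂) t) ^ 2 - q₂ t * (u t) ^ 2
    with hφdef
  set w : ℝ → ℝ := fun t => p₂ t * derivWithin v (Set.Icc t₁ t₂) t with hwdef
  set ψ : ℝ → ℝ := fun t =>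
    p₂ t * (derivWithin u (Set.Icc t₁ t₂) t - derivWithin v (Set.Icc t₁ t₂) t / v t * u t) ^ 2
    with hψdef
  set g : ℝ → ℝ := fun t => w t * u t * u t / v t with hgdef
  have hsub : Set.Ioo t₁ t₂ ⊆ Set.Icc t₁ t₂ := Set.Ioo_subset_Icc_self
  have hUD : UniqueDiffOn ℝ (Set.Icc t₁ t₂) := uniqueDiffOn_Icc ht
  have huc : ContinuousOn u (Set.Icc t₁ t₂) := hu.continuousOn
  have hvc : ContinuousOn v (Set.Icc t₁ t₂) := hv1.continuousOn
  have hu'c : ContinuousOn (fun t => derivWithin u (Set.Icc t₁ t₂) t) (Set.Icc t₁ t₂) :=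
    hu.continuousOn_derivWithin hUD le_rfl
  have hv'c : ContinuousOn (fun t => derivWithin v (Set.Icc t₁ t₂) t) (Set.Icc t₁ t₂) :=
    hv1.continuousOn_derivWithin hUD le_rfl
  have hwc : ContinuousOn w (Set.Icc t₁ t₂) := hv2.continuousOn
  have hφc : ContinuousOn φ (Set.Icc t₁ t₂) :=
    (hp₂.mul (hu'c.pow 2)).sub (hq₂.mul (huc.pow 2))
  have hψc : ContinuousOn ψ (Set.Ioo t₁ t₂) := by
    apply ContinuousOn.mul (hp₂.mono hsub)
    apply ContinuousOn.pow
    apply ContinuousOn.sub (hu'c.mono hsub)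
    exact ((hv'c.mono hsub).div (hvc.mono hsub) (fun t ht' => hcon t ht')).mul (huc.mono hsub)
  have hψnn : ∀ x ∈ Set.Icc t₁ t₂, 0 ≤ ψ x := fun x hx =>
    mul_nonneg (le_of_lt (hp₂pos x hx)) (sq_nonneg _)
  have hvne : ∃ s ∈ Set.Icc t₁ t₂, v s ≠ 0 := by
    by_contra h
    push_neg at h
    exact hvu ⟨0, fun t htI => by rw [h t htI, zero_mul]⟩
  have hsubIoo : ∀ {a b : ℝ}, a ∈ Set.Ioo t₁ t₂ → b ∈ Set.Ioo t₁ t₂ →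
      Set.uIcc a b ⊆ Set.Ioo t₁ t₂ := by
    intro a b ha hb x hx
    rw [Set.uIcc, Set.mem_Icc] at hx
    exact ⟨lt_of_lt_of_le (lt_min ha.1 hb.1) hx.1, lt_of_le_of_lt hx.2 (max_lt ha.2 hb.2)⟩
  have hφint : ∀ {a b : ℝ}, a ∈ Set.Icc t₁ t₂ → b ∈ Set.Icc t₁ t₂ →
      IntervalIntegrable φ MeasureTheory.volume a b := by
    intro a b ha hb
    apply ContinuousOn.intervalIntegrable
    apply hφc.mono
    rw [← Set.uIcc_of_le ht.le]
    exact Set.uIcc_subset_uIcc (by rwa [Set.uIcc_of_le ht.le]) (by rwa [Set.uIcc_of_le ht.le])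
  have hψint : ∀ {a b : ℝ}, a ∈ Set.Ioo t₁ t₂ → b ∈ Set.Ioo t₁ t₂ →
      IntervalIntegrable ψ MeasureTheory.volume a b := fun ha hb =>
    (hψc.mono (hsubIoo ha hb)).intervalIntegrable
  -- limits of g at the endpoints
  have hlim : ∀ x, x = t₁ ∨ x = t₂ → Filter.Tendsto g (𝓝[Set.Ioo t₁ t₂] x) (𝓝 0) := by
    intro x hx
    have hxI : x ∈ Set.Icc t₁ t₂ := by
      rcases hx with rfl | rfl
      · exact ⟨le_rfl, ht.le⟩
      · exact ⟨ht.le, le_rfl⟩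
    have hux : u x = 0 := by rcases hx with rfl | rfl; exacts [hu₁, hu₂]
    have hxnotin : x ∉ Set.Ioo t₁ t₂ := by
      rcases hx with rfl | rfl
      · exact fun h => lt_irrefl _ h.1
      · exact fun h => lt_irrefl _ h.2
    have hratio : ∃ L, Filter.Tendsto (fun t => u t / v t) (𝓝[Set.Ioo t₁ t₂] x) (𝓝 L) := by
      by_cases hvx : v x = 0
      · have hvd : derivWithin v (Set.Icc t₁ t₂) x ≠ 0 := by
          intro h0'
          obtain ⟨s, hs, hsne⟩ := hvne
          exact hsne (ode_zero_unique t₁ t₂ ht p₂ q₂ v hp₂ hq₂ hp₂pos hv1 hv2 hv3 x hx hvx h0'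
            s hs)
        have hu' : HasDerivWithinAt u (derivWithin u (Set.Icc t₁ t₂) x) (Set.Ioo t₁ t₂) x :=
          (((hu.differentiableOn one_ne_zero) x hxI).hasDerivWithinAt).mono hsub
        have hv' : HasDerivWithinAt v (derivWithin v (Set.Icc t₁ t₂) x) (Set.Ioo t₁ t₂) x :=
          (((hv1.differentiableOn one_ne_zero) x hxI).hasDerivWithinAt).mono hsub
        rw [hasDerivWithinAt_iff_tendsto_slope' hxnotin] at hu' hv'
        refine ⟨_, Filter.Tendsto.congr' ?_ (hu'.div hv' hvd)⟩
        filter_upwards [self_mem_nhdsWithin] with t htIoo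
        have htx : t - x ≠ 0 := by
          rcases hx with rfl | rfl
          · exact sub_ne_zero.mpr (ne_of_gt htIoo.1)
          · exact sub_ne_zero.mpr (ne_of_lt htIoo.2)
        have haux : ∀ (a b d : ℝ), d ≠ 0 → a / d / (b / d) = a / b := by
          intro a b d hd
          rcases eq_or_ne b 0 with rfl | hb
          · simp
          · field_simp
        show slope u x t / slope v x t = u t / v t
        rw [slope_def_field, slope_def_field, hux, hvx, sub_zero, sub_zero]
        exact haux (u t) (v t) (t - x) htx
      · exact ⟨_, (((huc x hxI).mono hsub).div ((hvc x hxI).mono hsub) hvx)⟩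
    obtain ⟨L, hL⟩ := hratio
    have h1 : Filter.Tendsto (fun t => w t * u t) (𝓝[Set.Ioo t₁ t₂] x) (𝓝 (w x * u x)) :=
      ((hwc x hxI).mul (huc x hxI)).mono hsub
    have h2 := h1.mul hL
    rw [hux, mul_zero, zero_mul] at h2
    refine h2.congr (fun t => ?_)
    simp only [hgdef]
    rw [mul_div_assoc]
  -- Picone identity
  have hg' : ∀ t ∈ Set.Ioo t₁ t₂, HasDerivAt g (φ t - ψ t) t := by
    intro t ht'
    have htI : t ∈ Set.Icc t₁ t₂ := hsub ht'
    have hmem : Set.Icc t₁ t₂ ∈ 𝓝 t := Icc_mem_nhds ht'.1 ht'.2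
    have hvnet : v t ≠ 0 := hcon t ht'
    have hut : HasDerivAt u (derivWithin u (Set.Icc t₁ t₂) t) t :=
      ((((hu.differentiableOn one_ne_zero) t htI).hasDerivWithinAt).mono_of_mem_nhdsWithin
        (nhdsWithin_le_nhds hmem)).hasDerivAt hmem
    have hvt : HasDerivAt v (derivWithin v (Set.Icc t₁ t₂) t) t :=
      ((((hv1.differentiableOn one_ne_zero) t htI).hasDerivWithinAt).mono_of_mem_nhdsWithin
        (nhdsWithin_le_nhds hmem)).hasDerivAt hmem
    have hwt : HasDerivAt w (-(q₂ t * v t)) t := by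
      have h := ((((hv2.differentiableOn one_ne_zero) t htI).hasDerivWithinAt).mono_of_mem_nhdsWithin
        (nhdsWithin_le_nhds hmem)).hasDerivAt hmem
      have he : derivWithin w (Set.Icc t₁ t₂) t = -(q₂ t * v t) := by
        have := hv3 t htI; linarith
      rwa [he] at h
    have H : HasDerivAt g _ t := ((hwt.mul hut).mul hut).div hvt hvnet
    convert H using 1
    simp only [hφdef, hψdef, hwdef, Pi.mul_apply]
    field_simp
    ring
  -- FTC
  have hFTC : ∀ a b, a ∈ Set.Ioo t₁ t₂ → b ∈ Set.Ioo t₁ t₂ → a ≤ b →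
      (∫ t in a..b, ψ t) = (∫ t in a..b, φ t) - (g b - g a) := by
    intro a b ha hb hab
    have hsub' : Set.uIcc a b ⊆ Set.Ioo t₁ t₂ := hsubIoo ha hb
    have hψi : IntervalIntegrable ψ MeasureTheory.volume a b := hψint ha hb
    have hφi : IntervalIntegrable φ MeasureTheory.volume a b := hφint (hsub ha) (hsub hb)
    have heq : (∫ t in a..b, (φ t - ψ t)) = g b - g a :=
      intervalIntegral.integral_eq_sub_of_hasDerivAt (fun t ht' => hg' t (hsub' ht'))
        (hφi.sub hψi)
    rw [intervalIntegral.integral_sub hφi hψi] at heq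
    linarith
  -- bound on ∫ φ over subintervals
  obtain ⟨C, hC⟩ := isCompact_Icc.exists_bound_of_continuousOn hφc
  have hbound : ∀ a b, a ∈ Set.Ioo t₁ t₂ → b ∈ Set.Ioo t₁ t₂ → a ≤ b →
      (∫ t in a..b, φ t) ≤ (∫ t in t₁..t₂, φ t) + C * (a - t₁) + C * (t₂ - b) := by
    intro a b ha hb hab
    have h1 : (∫ t in t₁..a, φ t) + (∫ t in a..b, φ t) = ∫ t in t₁..b, φ t :=
      intervalIntegral.integral_add_adjacent_intervals
        (hφint ⟨le_rfl, ht.le⟩ (hsub ha)) (hφint (hsub ha) (hsub hb))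
    have h2 : (∫ t in t₁..b, φ t) + (∫ t in b..t₂, φ t) = ∫ t in t₁..t₂, φ t :=
      intervalIntegral.integral_add_adjacent_intervals
        (hφint ⟨le_rfl, ht.le⟩ (hsub hb)) (hφint (hsub hb) ⟨ht.le, le_rfl⟩)
    have h3 : |∫ t in t₁..a, φ t| ≤ C * (a - t₁) := by
      have hb' := intervalIntegral.norm_integral_le_of_norm_le_const
        (C := C) (f := φ) (a := t₁) (b := a) ?_
      · rw [Real.norm_eq_abs, abs_of_nonneg (sub_nonneg.mpr (le_of_lt ha.1))] at hb'
        linarith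
      · intro x hx
        rw [Set.uIoc_of_le (le_of_lt ha.1)] at hx
        exact hC x ⟨le_of_lt hx.1, hx.2.trans (le_of_lt ha.2)⟩
    have h4 : |∫ t in b..t₂, φ t| ≤ C * (t₂ - b) := by
      have hb' := intervalIntegral.norm_integral_le_of_norm_le_const
        (C := C) (f := φ) (a := b) (b := t₂) ?_
      · rw [Real.norm_eq_abs, abs_of_nonneg (sub_nonneg.mpr (le_of_lt hb.2))] at hb'
        linarith
      · intro x hx
        rw [Set.uIoc_of_le (le_of_lt hb.2)] at hx
        exact hC x ⟨(le_of_lt hb.1).trans (le_of_lt hx.1), hx.2⟩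
    have h5 := abs_le.mp h3
    have h6 := abs_le.mp h4
    linarith
  -- the key inequality: ∫ ψ over any subinterval is ≤ 0
  have hkey : ∀ a₀ ∈ Set.Ioo t₁ t₂, ∀ b₀ ∈ Set.Ioo t₁ t₂, a₀ ≤ b₀ →
      (∫ t in a₀..b₀, ψ t) ≤ 0 := by
    intro a₀ ha₀ b₀ hb₀ hab₀
    have hglim₁ : Filter.Tendsto g (𝓝[>] t₁) (𝓝 0) := by
      rw [← nhdsWithin_Ioo_eq_nhdsGT ht]; exact hlim t₁ (Or.inl rfl)
    have hglim₂ : Filter.Tendsto g (𝓝[<] t₂) (𝓝 0) := by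
      rw [← nhdsWithin_Ioo_eq_nhdsLT ht]; exact hlim t₂ (Or.inr rfl)
    have hstep : ∀ a ∈ Set.Ioc t₁ a₀,
        (∫ t in a..b₀, ψ t) ≤ (∫ t in t₁..t₂, φ t) + (C * (a - t₁) + g a) := by
      intro a ha
      have haI : a ∈ Set.Ioo t₁ t₂ := ⟨ha.1, lt_of_le_of_lt (ha.2.trans hab₀) hb₀.2⟩
      have htendC : Filter.Tendsto (fun b => C * (t₂ - b) - g b) (𝓝[<] t₂) (𝓝 0) := by
        have h1 : Filter.Tendsto (fun b : ℝ => C * (t₂ - b)) (𝓝[<] t₂) (𝓝 (C * (t₂ - t₂))) :=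
          ((continuous_const.mul (continuous_const.sub continuous_id)).tendsto t₂).mono_left
            nhdsWithin_le_nhds
        rw [sub_self, mul_zero] at h1
        simpa using h1.sub hglim₂
      have htend : Filter.Tendsto
          (fun b => (∫ t in t₁..t₂, φ t) + (C * (a - t₁) + g a) + (C * (t₂ - b) - g b))
          (𝓝[<] t₂) (𝓝 ((∫ t in t₁..t₂, φ t) + (C * (a - t₁) + g a) + 0)) :=
        tendsto_const_nhds.add htendC
      rw [add_zero] at htend
      refine ge_of_tendsto htend ?_
      filter_upwards [eventually_mem_nhdsWithin,
        eventually_nhdsWithin_of_eventually_nhds (eventually_gt_nhds hb₀.2)] with b hb1 hb2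
      have hbI : b ∈ Set.Ioo t₁ t₂ := ⟨lt_trans hb₀.1 hb2, hb1⟩
      have hsplit : (∫ t in a..b₀, ψ t) + (∫ t in b₀..b, ψ t) = ∫ t in a..b, ψ t :=
        intervalIntegral.integral_add_adjacent_intervals (hψint haI hb₀) (hψint hb₀ hbI)
      have hnn : 0 ≤ ∫ t in b₀..b, ψ t := by
        apply intervalIntegral.integral_nonneg (le_of_lt hb2)
        intro x hx
        exact hψnn x ⟨le_of_lt (lt_of_lt_of_le hb₀.1 hx.1), hx.2.trans (le_of_lt hbI.2)⟩
      have hF := hFTC a b haI hbI (le_of_lt (lt_of_le_of_lt (ha.2.trans hab₀) hb2))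
      have hB := hbound a b haI hbI (le_of_lt (lt_of_le_of_lt (ha.2.trans hab₀) hb2))
      linarith
    have htendA : Filter.Tendsto (fun a => (∫ t in t₁..t₂, φ t) + (C * (a - t₁) + g a))
        (𝓝[>] t₁) (𝓝 ((∫ t in t₁..t₂, φ t) + 0)) := by
      apply tendsto_const_nhds.add
      have h1 : Filter.Tendsto (fun a : ℝ => C * (a - t₁)) (𝓝[>] t₁) (𝓝 (C * (t₁ - t₁))) :=
        ((continuous_const.mul (continuous_id.sub continuous_const)).tendsto t₁).mono_left
          nhdsWithin_le_nhds
      rw [sub_self, mul_zero] at h1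
      simpa using h1.add hglim₁
    rw [add_zero] at htendA
    have h2 : (∫ t in a₀..b₀, ψ t) ≤ ∫ t in t₁..t₂, φ t := by
      refine ge_of_tendsto htendA ?_
      filter_upwards [eventually_mem_nhdsWithin,
        eventually_nhdsWithin_of_eventually_nhds (eventually_lt_nhds ha₀.1)] with a ha1 ha2
      have haI : a ∈ Set.Ioo t₁ t₂ := ⟨ha1, lt_trans ha2 ha₀.2⟩
      have hsplit : (∫ t in a..a₀, ψ t) + (∫ t in a₀..b₀, ψ t) = ∫ t in a..b₀, ψ t :=
        intervalIntegral.integral_add_adjacent_intervals (hψint haI ha₀) (hψint ha₀ hb₀)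
      have hnn : 0 ≤ ∫ t in a..a₀, ψ t := by
        apply intervalIntegral.integral_nonneg (le_of_lt ha2)
        intro x hx
        exact hψnn x ⟨le_of_lt (lt_of_lt_of_le ha1 hx.1), hx.2.trans (le_of_lt ha₀.2)⟩
      have hs := hstep a ⟨ha1, le_of_lt ha2⟩
      linarith
    linarith
  -- ψ vanishes identically on the open interval
  have hψ0 : ∀ t ∈ Set.Ioo t₁ t₂, ψ t = 0 := by
    intro t ht'
    by_contra hne
    have hψt : 0 < ψ t := lt_of_le_of_ne (hψnn t (hsub ht')) (Ne.symm hne)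
    have hct : ContinuousAt ψ t := (hψc t ht').continuousAt (isOpen_Ioo.mem_nhds ht')
    have hev : ∀ᶠ x in 𝓝 t, ψ t / 2 < ψ x := hct.eventually_const_lt (half_lt_self hψt)
    obtain ⟨ε, hε, hball⟩ := Metric.eventually_nhds_iff.mp hev
    set α : ℝ := max ((t₁ + t) / 2) (t - ε / 2) with hαdef
    set β : ℝ := min ((t + t₂) / 2) (t + ε / 2) with hβdef
    have hαt : α < t := max_lt (by linarith [ht'.1]) (by linarith)
    have htβ : t < β := lt_min (by linarith [ht'.2]) (by linarith)
    have hαI : α ∈ Set.Ioo t₁ t₂ := ⟨lt_of_lt_of_le (by linarith [ht'.1]) (le_max_left _ _),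
      lt_trans (lt_trans hαt htβ) (min_le_left _ _ |>.trans_lt (by linarith [ht'.2]))⟩
    have hβI : β ∈ Set.Ioo t₁ t₂ := ⟨lt_trans hαI.1 (lt_trans hαt htβ),
      lt_of_le_of_lt (min_le_left _ _) (by linarith [ht'.2])⟩
    have h1 : (∫ x in α..β, ψ x) ≤ 0 := hkey α hαI β hβI (le_of_lt (lt_trans hαt htβ))
    have h2 : 0 < ∫ x in α..β, ψ x := by
      apply intervalIntegral_pos_of_pos_on (hψint hαI hβI) _ (lt_trans hαt htβ)
      intro x hx
      have hdist : dist x t < ε := by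
        rw [Real.dist_eq, abs_sub_lt_iff]
        constructor
        · have : x < β := hx.2
          have : β ≤ t + ε / 2 := min_le_right _ _
          linarith
        · have : α < x := hx.1
          have : t - ε / 2 ≤ α := le_max_right _ _
          linarith
      have := hball hdist
      linarith [half_pos hψt]
    linarith
  -- hence u' v = v' u on the open interval, so u / v is constant there
  have hr0 : ∀ t ∈ Set.Ioo t₁ t₂, HasDerivAt (fun s => u s / v s) 0 t := by
    intro t ht'
    have htI : t ∈ Set.Icc t₁ t₂ := hsub ht'
    have hmem : Set.Icc t₁ t₂ ∈ 𝓝 t := Icc_mem_nhds ht'.1 ht'.2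
    have hvnet : v t ≠ 0 := hcon t ht'
    have hut : HasDerivAt u (derivWithin u (Set.Icc t₁ t₂) t) t :=
      ((((hu.differentiableOn one_ne_zero) t htI).hasDerivWithinAt).mono_of_mem_nhdsWithin
        (nhdsWithin_le_nhds hmem)).hasDerivAt hmem
    have hvt : HasDerivAt v (derivWithin v (Set.Icc t₁ t₂) t) t :=
      ((((hv1.differentiableOn one_ne_zero) t htI).hasDerivWithinAt).mono_of_mem_nhdsWithin
        (nhdsWithin_le_nhds hmem)).hasDerivAt hmem
    have H := hut.div hvt hvnet
    have hs : derivWithin u (Set.Icc t₁ t₂) t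
        - derivWithin v (Set.Icc t₁ t₂) t / v t * u t = 0 := by
      have h0 := hψ0 t ht'
      simp only [hψdef] at h0
      rcases mul_eq_zero.mp h0 with h | h
      · exact absurd h (ne_of_gt (hp₂pos t htI))
      · exact sq_eq_zero_iff.mp h
    have h2 : derivWithin u (Set.Icc t₁ t₂) t * v t = u t * derivWithin v (Set.Icc t₁ t₂) t := by
      have h3 := sub_eq_zero.mp hs
      rw [h3]
      field_simp
    have hzero : (derivWithin u (Set.Icc t₁ t₂) t * v t
        - u t * derivWithin v (Set.Icc t₁ t₂) t) / v t ^ 2 = 0 := by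
      rw [h2, sub_self, zero_div]
    rwa [hzero] at H
  set m : ℝ := (t₁ + t₂) / 2 with hmdef
  have hmid : m ∈ Set.Ioo t₁ t₂ := ⟨by rw [hmdef]; linarith, by rw [hmdef]; linarith⟩
  set c : ℝ := u m / v m with hcdef
  have hconst : ∀ t ∈ Set.Ioo t₁ t₂, u t / v t = c := by
    intro t ht'
    have hbnd := Convex.norm_image_sub_le_of_norm_hasDerivWithin_le
      (f := fun s => u s / v s) (f' := fun _ => 0) (C := 0) (s := Set.Ioo t₁ t₂)
      (fun x hx => (hr0 x hx).hasDerivWithinAt) (fun x _ => by simp) (convex_Ioo t₁ t₂)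
      hmid ht'
    have : ‖u t / v t - u m / v m‖ ≤ 0 := by simpa using hbnd
    have h0 : u t / v t - u m / v m = 0 := by
      have := norm_le_zero_iff.mp this
      exact this
    rw [hcdef]
    linarith [sub_eq_zero.mp h0]
  have hc0 : c ≠ 0 := by
    intro hc
    obtain ⟨s, hsI, hsne⟩ := hunt
    apply hsne
    rcases eq_or_lt_of_le hsI.1 with h | h
    · rw [← h]; exact hu₁
    rcases eq_or_lt_of_le hsI.2 with h2 | h2
    · rw [h2]; exact hu₂
    · have hcc := hconst s ⟨h, h2⟩
      rw [hc] at hcc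
      rcases div_eq_zero_iff.mp hcc with h3 | h3
      · exact h3
      · exact absurd h3 (hcon s ⟨h, h2⟩)
  have hIoo_eq : ∀ t ∈ Set.Ioo t₁ t₂, v t = c⁻¹ * u t := by
    intro t ht'
    have h1 : u t = c * v t := (div_eq_iff (hcon t ht')).mp (hconst t ht')
    rw [h1, ← mul_assoc, inv_mul_cancel₀ hc0, one_mul]
  have hend : ∀ x, x = t₁ ∨ x = t₂ → v x = c⁻¹ * u x := by
    intro x hx
    have hxI : x ∈ Set.Icc t₁ t₂ := by
      rcases hx with rfl | rfl
      · exact ⟨le_rfl, ht.le⟩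
      · exact ⟨ht.le, le_rfl⟩
    have hNe : (𝓝[Set.Ioo t₁ t₂] x).NeBot := by
      rcases hx with rfl | rfl
      · rw [nhdsWithin_Ioo_eq_nhdsGT ht]; infer_instance
      · rw [nhdsWithin_Ioo_eq_nhdsLT ht]; infer_instance
    have h1 : Filter.Tendsto v (𝓝[Set.Ioo t₁ t₂] x) (𝓝 (v x)) := (hvc x hxI).mono hsub
    have h3 : Filter.Tendsto (fun t => c⁻¹ * u t) (𝓝[Set.Ioo t₁ t₂] x) (𝓝 (c⁻¹ * u x)) :=
      continuousWithinAt_const.mul ((huc x hxI).mono hsub)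
    have h2 : Filter.Tendsto v (𝓝[Set.Ioo t₁ t₂] x) (𝓝 (c⁻¹ * u x)) := by
      refine Filter.Tendsto.congr' ?_ h3
      filter_upwards [self_mem_nhdsWithin] with t ht'
      exact (hIoo_eq t ht').symm
    exact tendsto_nhds_unique h1 h2
  apply hvu
  refine ⟨c⁻¹, fun t htI => ?_⟩
  rcases eq_or_lt_of_le htI.1 with h | h
  · rw [← h]; exact hend t₁ (Or.inl rfl)
  rcases eq_or_lt_of_le htI.2 with h2 | h2
  · rw [h2]; exact hend t₂ (Or.inr rfl)
  · exact hIoo_eq t ⟨h, h2⟩
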